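/- For the choice of parameters a = 1 - 1.31/e, c = 0.98, d = 0.62, g = 0.88, with h = (c·a - 1 + d)/(a - 1 + d) and b = g·ln(1-h)/ln(1-g), the following all hold: a·c + d > 1, h > 0.92, 1 < b < 1.08, and each of the three quantities (i) 1/c - (1/c - a)·(e(1-a))^{-c}, (ii) 1 - (d/e)·((b+d-bd)/d)^{1/b}, and (iii) h(1-d) + (1/2 - (b-g)/3)·(c·a - (1-d) - (a-1+d)(b-g)) + (1/2)(1 - (b-g)/3)·d, is strictly greater than 1 - 1/e + 1/400. -/

import Mathlib

set_option maxHeartbeats 1000000 in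
lemma exp_ub (x b : ℝ) (h1 : -1 ≤ x) (h2 : x ≤ 1)
    (h : (∑ m ∈ Finset.range 12, x ^ m / (Nat.factorial m : ℝ)) + x ^ 12 * (13 / 5748019200) ≤ b) :
    Real.exp x ≤ b := by
  have hx : |x| ≤ 1 := abs_le.mpr ⟨h1, h2⟩
  have hb := Real.exp_bound hx (n := 12) (by norm_num)
  have h12 : |x| ^ 12 = x ^ 12 := by rw [← abs_pow, abs_of_nonneg (by positivity)]
  rw [h12] at hb
  norm_num [Nat.factorial] at hb
  have := (abs_le.mp hb).2
  linarith

set_option maxHeartbeats 1000000 in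
lemma exp_lb (x b : ℝ) (h1 : -1 ≤ x) (h2 : x ≤ 1)
    (h : b ≤ (∑ m ∈ Finset.range 12, x ^ m / (Nat.factorial m : ℝ)) - x ^ 12 * (13 / 5748019200)) :
    b ≤ Real.exp x := by
  have hx : |x| ≤ 1 := abs_le.mpr ⟨h1, h2⟩
  have hb := Real.exp_bound hx (n := 12) (by norm_num)
  have h12 : |x| ^ 12 = x ^ 12 := by rw [← abs_pow, abs_of_nonneg (by positivity)]
  rw [h12] at hb
  norm_num [Nat.factorial] at hb
  have := (abs_le.mp hb).1
  linarith

set_option maxHeartbeats 2000000 in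
theorem stmt_15 :
    let e : ℝ := Real.exp 1
    let a : ℝ := 1 - 1.31 / e
    let c : ℝ := 0.98
    let d : ℝ := 0.62
    let g : ℝ := 0.88
    let h : ℝ := (c * a - 1 + d) / (a - 1 + d)
    let b : ℝ := g * Real.log (1 - h) / Real.log (1 - g)
    a * c + d > 1 ∧ h > 0.92 ∧ 1 < b ∧ b < 1.08 ∧
    1/c - (1/c - a) * (e * (1 - a)) ^ (-c) > 1 - 1/e + 1/400 ∧
    1 - (d/e) * ((b + d - b*d)/d) ^ (1/b) > 1 - 1/e + 1/400 ∧
    h * (1 - d) + (1/2 - (b - g)/3) * (c*a - (1 - d) - (a - 1 + d)*(b - g))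
      + (1/2) * (1 - (b - g)/3) * d > 1 - 1/e + 1/400 := by
  intro e a c d g h b
  have he : e = Real.exp 1 := rfl
  have ha : a = 1 - 1.31 / e := rfl
  have hc : c = 0.98 := rfl
  have hd : d = 0.62 := rfl
  have hg : g = 0.88 := rfl
  have hh : h = (c * a - 1 + d) / (a - 1 + d) := rfl
  have hbdef : b = g * Real.log (1 - h) / Real.log (1 - g) := rfl
  clear_value b h g d c a e
  have hepos : (0:ℝ) < e := he ▸ Real.exp_pos 1
  have hene : e ≠ 0 := ne_of_gt hepos
  have hE1 : (2.7182818283:ℝ) < e := he ▸ Real.exp_one_gt_d9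
  have hE2 : e < 2.7182818293 := by rw [he]; exact lt_trans Real.exp_one_lt_d9 (by norm_num)
  have h131u : 1.31 / e < 0.48192207 := by rw [div_lt_iff₀ hepos]; linarith
  have h131l : (0.48192206:ℝ) < 1.31 / e := by rw [lt_div_iff₀ hepos]; linarith
  have haL : (0.51807793:ℝ) ≤ a := by rw [ha]; linarith
  have haU : a ≤ 0.51807794 := by rw [ha]; linarith
  have hinv : (0.367879440:ℝ) < 1/e := by rw [lt_div_iff₀ hepos]; linarith
  have htgt : 1 - 1/e + 1/400 < 0.63462056 := by linarith
  -- part 1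
  have p1 : a * c + d > 1 := by rw [hc, hd]; linarith
  -- bounds on 1 - h
  have hden : (0:ℝ) < a - 1 + d := by rw [hd]; linarith
  have hdne : a - 1 + d ≠ 0 := ne_of_gt hden
  have hw_eq : 1 - h = 0.02 * a / (a - 1 + d) := by
    rw [hh, hc]
    field_simp
    ring
  have hwL : (0.0750413:ℝ) ≤ 1 - h := by
    rw [hw_eq, le_div_iff₀ hden, hd]; linarith
  have hwU : 1 - h ≤ 0.0750414 := by
    rw [hw_eq, div_le_iff₀ hden, hd]; linarith
  have p2 : h > 0.92 := by linarith
  have hwpos : (0:ℝ) < 1 - h := by linarith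
  -- exp 3 bounds
  have hE3eq : Real.exp 3 = Real.exp 1 * (Real.exp 1 * Real.exp 1) := by
    rw [← Real.exp_add, ← Real.exp_add]; norm_num
  have he1L := Real.exp_one_gt_d9
  have he1U := Real.exp_one_lt_d9
  have hsqL : (2.7182818283:ℝ) * 2.7182818283 < Real.exp 1 * Real.exp 1 :=
    mul_lt_mul'' he1L he1L (by norm_num) (by norm_num)
  have hsqU : Real.exp 1 * Real.exp 1 < (2.7182818286:ℝ) * 2.7182818286 :=
    mul_lt_mul'' he1U he1U (le_of_lt (Real.exp_pos 1)) (le_of_lt (Real.exp_pos 1))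
  have hex3L : (20.0855369:ℝ) < Real.exp 3 := by
    rw [hE3eq]
    calc (20.0855369:ℝ) < 2.7182818283 * (2.7182818283 * 2.7182818283) := by norm_num
      _ < Real.exp 1 * (Real.exp 1 * Real.exp 1) :=
        mul_lt_mul'' he1L hsqL (by norm_num) (by norm_num)
  have hex3U : Real.exp 3 < (20.085537:ℝ) := by
    rw [hE3eq]
    calc Real.exp 1 * (Real.exp 1 * Real.exp 1)
        < 2.7182818286 * (2.7182818286 * 2.7182818286) :=
          mul_lt_mul'' he1U hsqU (le_of_lt (Real.exp_pos 1))
            (le_of_lt (mul_pos (Real.exp_pos 1) (Real.exp_pos 1)))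
      _ < 20.085537 := by norm_num
  -- log 0.12 bounds
  have hg12 : (1:ℝ) - g = 0.12 := by rw [hg]; norm_num
  have hA : Real.exp 0.8797364 ≤ 0.12 * 20.0855369 :=
    exp_ub _ _ (by norm_num) (by norm_num) (by norm_num [Finset.sum_range_succ, Nat.factorial])
  have hB : (0.12:ℝ) * 20.085537 ≤ Real.exp 0.8797365 :=
    exp_lb _ _ (by norm_num) (by norm_num) (by norm_num [Finset.sum_range_succ, Nat.factorial])
  have keyA : Real.exp (-2.1202636) * Real.exp 3 = Real.exp 0.8797364 := by
    rw [← Real.exp_add]; norm_num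
  have keyB : Real.exp (-2.1202635) * Real.exp 3 = Real.exp 0.8797365 := by
    rw [← Real.exp_add]; norm_num
  have hL2l : (-2.1202636:ℝ) < Real.log (1 - g) := by
    rw [hg12, Real.lt_log_iff_exp_lt (by norm_num)]
    exact lt_of_mul_lt_mul_right (by linarith [keyA, hA, hex3L]) (le_of_lt (Real.exp_pos 3))
  have hL2u : Real.log (1 - g) < -2.1202635 := by
    rw [hg12, Real.log_lt_iff_lt_exp (by norm_num)]
    exact lt_of_mul_lt_mul_right (by linarith [keyB, hB, hex3U]) (le_of_lt (Real.exp_pos 3))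
  have hL2neg : Real.log (1 - g) < 0 := by linarith
  rw [hg] at hL2l hL2u hL2neg hbdef
  -- log (1-h) bounds
  have hC : Real.exp 0.4102832 ≤ 0.0750413 * 20.0855369 :=
    exp_ub _ _ (by norm_num) (by norm_num) (by norm_num [Finset.sum_range_succ, Nat.factorial])
  have hD : (0.0750414:ℝ) * 20.085537 ≤ Real.exp 0.4102852 :=
    exp_lb _ _ (by norm_num) (by norm_num) (by norm_num [Finset.sum_range_succ, Nat.factorial])
  have keyC : Real.exp (-2.5897168) * Real.exp 3 = Real.exp 0.4102832 := by
    rw [← Real.exp_add]; norm_num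
  have keyD : Real.exp (-2.5897148) * Real.exp 3 = Real.exp 0.4102852 := by
    rw [← Real.exp_add]; norm_num
  have hL1l : (-2.5897168:ℝ) < Real.log (1 - h) := by
    rw [Real.lt_log_iff_exp_lt hwpos]
    have : Real.exp (-2.5897168) < 0.0750413 :=
      lt_of_mul_lt_mul_right (by linarith [keyC, hC, hex3L]) (le_of_lt (Real.exp_pos 3))
    linarith
  have hL1u : Real.log (1 - h) < -2.5897148 := by
    rw [Real.log_lt_iff_lt_exp hwpos]
    have : (0.0750414:ℝ) < Real.exp (-2.5897148) :=
      lt_of_mul_lt_mul_right (by linarith [keyD, hD, hex3U]) (le_of_lt (Real.exp_pos 3))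
    linarith
  -- b bounds
  have hbL : (1.074842:ℝ) ≤ b := by
    rw [hbdef, le_div_iff_of_neg hL2neg]; linarith
  have hbU : b ≤ 1.0748432 := by
    rw [hbdef, div_le_iff_of_neg hL2neg]; linarith
  have p3 : 1 < b := by linarith
  have p4 : b < 1.08 := by linarith
  have hbpos : (0:ℝ) < b := by linarith
  -- part (i)
  have hea : e * (1 - a) = 1.31 := by rw [ha]; field_simp; ring
  have hlog131 : (0.270027:ℝ) < Real.log 1.31 := by
    rw [Real.lt_log_iff_exp_lt (by norm_num)]
    have := exp_ub 0.270027 1.3099999 (by norm_num) (by norm_num)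
      (by norm_num [Finset.sum_range_succ, Nat.factorial])
    linarith
  have hRle : (1.31:ℝ) ^ (-c) ≤ 0.7674956 := by
    rw [hc, Real.rpow_def_of_pos (by norm_num)]
    have h1 : Real.log 1.31 * -(0.98:ℝ) ≤ -0.26462646 := by linarith
    calc Real.exp (Real.log 1.31 * -(0.98:ℝ)) ≤ Real.exp (-0.26462646) :=
          Real.exp_le_exp.mpr h1
      _ ≤ 0.7674956 := exp_ub _ _ (by norm_num) (by norm_num)
          (by norm_num [Finset.sum_range_succ, Nat.factorial])
  have hRpos : (0:ℝ) < (1.31:ℝ) ^ (-c) := Real.rpow_pos_of_pos (by norm_num) _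
  have p5 : 1/c - (1/c - a) * (e * (1 - a)) ^ (-c) > 1 - 1/e + 1/400 := by
    rw [hea]
    have hmul : (1/c - a) * (1.31:ℝ) ^ (-c) ≤ (1/0.98 - 0.51807793) * 0.7674956 := by
      apply mul_le_mul _ hRle (le_of_lt hRpos) (by norm_num)
      rw [hc]; linarith
    rw [hc] at hmul ⊢
    linarith [hmul, htgt]
  -- part (ii)
  have hZ : (b + d - b*d)/d = (0.38*b + 0.62)/0.62 := by rw [hd]; ring
  have hZU : (b + d - b*d)/d ≤ 1.658775 := by
    rw [hZ, div_le_iff₀ (by norm_num : (0:ℝ) < 0.62)]; linarith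
  have hZL : (1.5:ℝ) ≤ (b + d - b*d)/d := by
    rw [hZ, le_div_iff₀ (by norm_num : (0:ℝ) < 0.62)]; linarith
  have hZpos : (0:ℝ) < (b + d - b*d)/d := by linarith
  have hlogZu : Real.log ((b + d - b*d)/d) < 0.5060795 := by
    rw [Real.log_lt_iff_lt_exp hZpos]
    have := exp_lb 0.5060795 1.6587751 (by norm_num) (by norm_num)
      (by norm_num [Finset.sum_range_succ, Nat.factorial])
    linarith
  have hlogZ0 : 0 ≤ Real.log ((b + d - b*d)/d) := Real.log_nonneg (by linarith)
  have hexpo : Real.log ((b + d - b*d)/d) * (1/b) ≤ 0.4708409 := by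
    have hib : 1/b ≤ 1/1.074842 := by
      apply one_div_le_one_div_of_le (by norm_num) hbL
    calc Real.log ((b + d - b*d)/d) * (1/b) ≤ 0.5060795 * (1/1.074842) :=
          mul_le_mul (le_of_lt hlogZu) hib (by positivity) (by norm_num)
      _ ≤ 0.4708409 := by norm_num
  have hY : ((b + d - b*d)/d) ^ (1/b) ≤ 1.6013625 := by
    rw [Real.rpow_def_of_pos hZpos]
    calc Real.exp (Real.log ((b + d - b*d)/d) * (1/b)) ≤ Real.exp 0.4708409 :=
          Real.exp_le_exp.mpr hexpo
      _ ≤ 1.6013625 := exp_ub _ _ (by norm_num) (by norm_num)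
          (by norm_num [Finset.sum_range_succ, Nat.factorial])
  have hYpos : (0:ℝ) < ((b + d - b*d)/d) ^ (1/b) := Real.rpow_pos_of_pos hZpos _
  have p6 : 1 - (d/e) * ((b + d - b*d)/d) ^ (1/b) > 1 - 1/e + 1/400 := by
    have hdiff : 1 - (d/e) * ((b + d - b*d)/d) ^ (1/b) - (1 - 1/e + 1/400)
        = (1 - 0.62 * ((b + d - b*d)/d) ^ (1/b))/e - 1/400 := by
      rw [hd]; field_simp; ring
    have key : 1/400 < (1 - 0.62 * ((b + d - b*d)/d) ^ (1/b))/e := by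
      rw [lt_div_iff₀ hepos]; linarith [hY, hE2]
    linarith
  -- part (iii)
  have p7 : h * (1 - d) + (1/2 - (b - g)/3) * (c*a - (1 - d) - (a - 1 + d)*(b - g))
      + (1/2) * (1 - (b - g)/3) * d > 1 - 1/e + 1/400 := by
    rw [hc, hd, hg]
    have hu1 : (0.194842:ℝ) ≤ b - 0.88 := by linarith
    have hu2 : b - 0.88 ≤ 0.1948432 := by linarith
    have hprod : (a - 1 + 0.62) * (b - 0.88) ≤ 0.0269062 := by
      calc (a - 1 + 0.62) * (b - 0.88) ≤ 0.13807794 * 0.1948432 :=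
            mul_le_mul (by linarith) hu2 (by linarith) (by norm_num)
        _ ≤ 0.0269062 := by norm_num
    have hin1 : (0.10081:ℝ) ≤ 0.98*a - (1 - 0.62) - (a - 1 + 0.62)*(b - 0.88) := by
      linarith
    have hterm2 : (0.4350522:ℝ) * 0.10081 ≤
        (1/2 - (b - 0.88)/3) * (0.98*a - (1 - 0.62) - (a - 1 + 0.62)*(b - 0.88)) :=
      mul_le_mul (by linarith) hin1 (by norm_num) (by linarith)
    linarith [hterm2, hwU, htgt, hu2]
  exact ⟨p1, p2, p3, p4, p5, p6, p7⟩
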